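/- There is a universal constant C such that for every q ∈ S², ∫_{S²} (1/|p - q|) d vol_{S²}(p) ≤ C; consequently, if E ⊆ S² is closed with vol_{S²}(E) ≥ δ/2 > 0, then the averaged 1-form ξ_E(q) = (1/vol_{S²}(E)) ∫_E ξ_p(q) d vol_{S²}(p) satisfies dξ_E = vol_{S²}|_{S²∖E} and |ξ_E| ≤ C'/δ on S² ∖ E for a universal constant C'. -/

import Mathlib

open MeasureTheory
open scoped RealInnerProductSpace

noncomputable section

/-- The unit sphere S² ⊂ ℝ³. -/
abbrev S2 : Set (EuclideanSpace ℝ (Fin 3)) := Metric.sphere 0 1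

/-- The surface (area) measure on S². -/
def sphereMeasure : Measure S2 := (volume : Measure (EuclideanSpace ℝ (Fin 3))).toSphere

/-- Cross product on ℝ³. -/
def crossE (u v : EuclideanSpace ℝ (Fin 3)) : EuclideanSpace ℝ (Fin 3) :=
  (WithLp.equiv 2 (Fin 3 → ℝ)).symm
    ![u 1 * v 2 - u 2 * v 1, u 2 * v 0 - u 0 * v 2, u 0 * v 1 - u 1 * v 0]

/-- The 1-form `ξ_p(q)·v = -⟨p × q, v⟩/(1 - ⟨p,q⟩)`, represented by the vector
`-(1 - ⟨p,q⟩)⁻¹ • (p × q)`. -/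
def xiVec (p q : EuclideanSpace ℝ (Fin 3)) : EuclideanSpace ℝ (Fin 3) :=
  -((1 - ⟪p, q⟫)⁻¹ • crossE p q)

/-- The averaged 1-form `ξ_E(q) = (1/vol(E)) ∫_E ξ_p(q) d vol_{S²}(p)`. -/
def xiAvg (E : Set S2) (q : EuclideanSpace ℝ (Fin 3)) : EuclideanSpace ℝ (Fin 3) :=
  (sphereMeasure E).toReal⁻¹ • ∫ p in E, xiVec (p : EuclideanSpace ℝ (Fin 3)) q ∂sphereMeasure

/-- Spherical coordinates `F(θ,φ)` on S². -/
def sphParamE (θ φ : ℝ) : EuclideanSpace ℝ (Fin 3) :=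
  (WithLp.equiv 2 (Fin 3 → ℝ)).symm
    ![Real.sin θ * Real.cos φ, Real.sin θ * Real.sin φ, Real.cos θ]

/-- `∂F/∂θ`. -/
def sphThetaE (θ φ : ℝ) : EuclideanSpace ℝ (Fin 3) :=
  (WithLp.equiv 2 (Fin 3 → ℝ)).symm
    ![Real.cos θ * Real.cos φ, Real.cos θ * Real.sin φ, -Real.sin θ]

/-- `∂F/∂φ`. -/
def sphPhiE (θ φ : ℝ) : EuclideanSpace ℝ (Fin 3) :=
  (WithLp.equiv 2 (Fin 3 → ℝ)).symm
    ![-Real.sin θ * Real.sin φ, Real.sin θ * Real.cos φ, 0]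

local notation "E3" => EuclideanSpace ℝ (Fin 3)

namespace Stmt9

open scoped Pointwise ENNReal

lemma inner3 (x y : E3) : ⟪x, y⟫ = x 0 * y 0 + x 1 * y 1 + x 2 * y 2 := by
  simp [PiLp.inner_apply, Fin.sum_univ_three, RCLike.inner_apply, conj_trivial]; ring

lemma normsq3 (x : E3) : ‖x‖^2 = x 0^2 + x 1^2 + x 2^2 := by
  rw [← real_inner_self_eq_norm_sq, inner3]; ring

lemma abs_comp_le (x : E3) (i : Fin 3) : |x i| ≤ ‖x‖ := by
  have h : (x i)^2 ≤ ‖x‖^2 := by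
    rw [normsq3]
    fin_cases i
    · show (x 0)^2 ≤ _; nlinarith [sq_nonneg (x 1), sq_nonneg (x 2)]
    · show (x 1)^2 ≤ _; nlinarith [sq_nonneg (x 0), sq_nonneg (x 2)]
    · show (x 2)^2 ≤ _; nlinarith [sq_nonneg (x 0), sq_nonneg (x 1)]
  calc |x i| = Real.sqrt ((x i)^2) := (Real.sqrt_sq_eq_abs _).symm
    _ ≤ Real.sqrt (‖x‖^2) := Real.sqrt_le_sqrt h
    _ = ‖x‖ := Real.sqrt_sq (norm_nonneg _)

lemma crossE_apply0 (u v : E3) : crossE u v 0 = u 1 * v 2 - u 2 * v 1 := by simp [crossE]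
lemma crossE_apply1 (u v : E3) : crossE u v 1 = u 2 * v 0 - u 0 * v 2 := by simp [crossE]
lemma crossE_apply2 (u v : E3) : crossE u v 2 = u 0 * v 1 - u 1 * v 0 := by simp [crossE]

lemma sphParamE_apply0 (s t : ℝ) : sphParamE s t 0 = Real.sin s * Real.cos t := by simp [sphParamE]
lemma sphParamE_apply1 (s t : ℝ) : sphParamE s t 1 = Real.sin s * Real.sin t := by simp [sphParamE]
lemma sphParamE_apply2 (s t : ℝ) : sphParamE s t 2 = Real.cos s := by simp [sphParamE]

lemma sphThetaE_apply0 (s t : ℝ) : sphThetaE s t 0 = Real.cos s * Real.cos t := by simp [sphThetaE]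
lemma sphThetaE_apply1 (s t : ℝ) : sphThetaE s t 1 = Real.cos s * Real.sin t := by simp [sphThetaE]
lemma sphThetaE_apply2 (s t : ℝ) : sphThetaE s t 2 = -Real.sin s := by simp [sphThetaE]

lemma sphPhiE_apply0 (s t : ℝ) : sphPhiE s t 0 = -Real.sin s * Real.sin t := by simp [sphPhiE]
lemma sphPhiE_apply1 (s t : ℝ) : sphPhiE s t 1 = Real.sin s * Real.cos t := by simp [sphPhiE]
lemma sphPhiE_apply2 (s t : ℝ) : sphPhiE s t 2 = 0 := by simp [sphPhiE]

lemma norm_sphParamE (s t : ℝ) : ‖sphParamE s t‖ = 1 := by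
  have h : ‖sphParamE s t‖^2 = 1 := by
    rw [normsq3, sphParamE_apply0, sphParamE_apply1, sphParamE_apply2]
    nlinarith [Real.sin_sq_add_cos_sq s, Real.sin_sq_add_cos_sq t]
  nlinarith [norm_nonneg (sphParamE s t)]


/-! ### Scalar coordinate functions -/

def Uf (p : E3) (s t : ℝ) : ℝ :=
  p 0 * (Real.sin s * Real.cos t) + p 1 * (Real.sin s * Real.sin t) + p 2 * Real.cos s

def Usf (p : E3) (s t : ℝ) : ℝ :=
  p 0 * (Real.cos s * Real.cos t) + p 1 * (Real.cos s * Real.sin t) - p 2 * Real.sin s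

def Vf (p : E3) (t : ℝ) : ℝ := p 1 * Real.cos t - p 0 * Real.sin t

def Wf (p : E3) (t : ℝ) : ℝ := p 0 * Real.cos t + p 1 * Real.sin t

def Af (p : E3) (s t : ℝ) : ℝ := Real.sin s * Usf p s t / (1 - Uf p s t)

def Bf (p : E3) (s t : ℝ) : ℝ := -Vf p t / (1 - Uf p s t)

def Af' (p : E3) (s t : ℝ) : ℝ :=
  ((Real.cos s * Usf p s t - Real.sin s * Uf p s t) * (1 - Uf p s t)
    + Real.sin s * Usf p s t * Usf p s t) / (1 - Uf p s t)^2

def Bf' (p : E3) (s t : ℝ) : ℝ :=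
  (Wf p t * (1 - Uf p s t) - Real.sin s * (Vf p t)^2) / (1 - Uf p s t)^2

lemma Uf_eq (p : E3) (s t : ℝ) : ⟪p, sphParamE s t⟫ = Uf p s t := by
  rw [inner3, sphParamE_apply0, sphParamE_apply1, sphParamE_apply2, Uf]

lemma Af_eq (p : E3) (s t : ℝ) : ⟪xiVec p (sphParamE s t), sphPhiE s t⟫ = Af p s t := by
  rw [xiVec, inner_neg_left, real_inner_smul_left, Uf_eq, inner3,
    crossE_apply0, crossE_apply1, crossE_apply2,
    sphParamE_apply0, sphParamE_apply1, sphParamE_apply2,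
    sphPhiE_apply0, sphPhiE_apply1, sphPhiE_apply2, Af, Usf]
  have ht := Real.sin_sq_add_cos_sq t
  field_simp
  linear_combination (-(p 2) * Real.sin s ^ 2 * (1 - Uf p s t)⁻¹) * ht

lemma Bf_eq (p : E3) (s t : ℝ) : ⟪xiVec p (sphParamE s t), sphThetaE s t⟫ = Bf p s t := by
  rw [xiVec, inner_neg_left, real_inner_smul_left, Uf_eq, inner3,
    crossE_apply0, crossE_apply1, crossE_apply2,
    sphParamE_apply0, sphParamE_apply1, sphParamE_apply2,
    sphThetaE_apply0, sphThetaE_apply1, sphThetaE_apply2, Bf, Vf]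
  have hs := Real.sin_sq_add_cos_sq s
  field_simp
  linear_combination ((p 0 * Real.sin t - p 1 * Real.cos t) * (1 - Uf p s t)⁻¹) * hs

lemma key_identity (p : E3) (s t : ℝ) (hp : ‖p‖ = 1) (hD : 1 - Uf p s t ≠ 0) :
    Af' p s t - Bf' p s t = Real.sin s := by
  have hp2 : p 0 ^ 2 + p 1 ^ 2 + p 2 ^ 2 = 1 := by rw [← normsq3, hp]; norm_num
  have hs := Real.sin_sq_add_cos_sq s
  have ht := Real.sin_sq_add_cos_sq t
  rw [Af', Bf', div_sub_div_same, div_eq_iff (pow_ne_zero 2 hD), Uf, Usf, Vf, Wf]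
  set a := p 0; set b := p 1; set c := p 2
  set ss := Real.sin s; set cs := Real.cos s
  set st := Real.sin t; set ct := Real.cos t
  linear_combination (((1 - (a * (ss * ct) + b * (ss * st) + c * cs)) * (a * ct + b * st)
      + ss * ((a * ct + b * st)^2 + c^2)) * hs) + (ss * (a^2 + b^2)) * ht + ss * hp2

lemma Usf_eq (p : E3) (s t : ℝ) : ⟪p, sphThetaE s t⟫ = Usf p s t := by
  rw [inner3, sphThetaE_apply0, sphThetaE_apply1, sphThetaE_apply2, Usf]; ring

lemma norm_sphThetaE (s t : ℝ) : ‖sphThetaE s t‖ = 1 := by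
  have h : ‖sphThetaE s t‖^2 = 1 := by
    rw [normsq3, sphThetaE_apply0, sphThetaE_apply1, sphThetaE_apply2]
    nlinarith [Real.sin_sq_add_cos_sq s, Real.sin_sq_add_cos_sq t]
  nlinarith [norm_nonneg (sphThetaE s t)]

lemma abs_Uf_le (p : E3) (hp : ‖p‖ = 1) (s t : ℝ) : |Uf p s t| ≤ 1 := by
  rw [← Uf_eq]
  calc |⟪p, sphParamE s t⟫| ≤ ‖p‖ * ‖sphParamE s t‖ := abs_real_inner_le_norm _ _
  _ = 1 := by rw [hp, norm_sphParamE]; norm_num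

lemma abs_Usf_le (p : E3) (hp : ‖p‖ = 1) (s t : ℝ) : |Usf p s t| ≤ 1 := by
  rw [← Usf_eq]
  calc |⟪p, sphThetaE s t⟫| ≤ ‖p‖ * ‖sphThetaE s t‖ := abs_real_inner_le_norm _ _
  _ = 1 := by rw [hp, norm_sphThetaE]; norm_num

lemma abs_Vf_le (p : E3) (hp : ‖p‖ = 1) (t : ℝ) : |Vf p t| ≤ 1 := by
  have h : Vf p t = ⟪p, sphPhiE (Real.pi/2) t⟫ := by
    rw [inner3, sphPhiE_apply0, sphPhiE_apply1, sphPhiE_apply2, Real.sin_pi_div_two, Vf]; ring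
  have hn : ‖sphPhiE (Real.pi/2) t‖ = 1 := by
    have h2 : ‖sphPhiE (Real.pi/2) t‖^2 = 1 := by
      rw [normsq3, sphPhiE_apply0, sphPhiE_apply1, sphPhiE_apply2, Real.sin_pi_div_two]
      nlinarith [Real.sin_sq_add_cos_sq t]
    nlinarith [norm_nonneg (sphPhiE (Real.pi/2) t)]
  rw [h]
  calc |⟪p, sphPhiE (Real.pi/2) t⟫| ≤ ‖p‖ * ‖sphPhiE (Real.pi/2) t‖ := abs_real_inner_le_norm _ _
  _ = 1 := by rw [hp, hn]; norm_num

lemma abs_Wf_le (p : E3) (hp : ‖p‖ = 1) (t : ℝ) : |Wf p t| ≤ 1 := by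
  have h : Wf p t = ⟪p, sphParamE (Real.pi/2) t⟫ := by
    rw [inner3, sphParamE_apply0, sphParamE_apply1, sphParamE_apply2, Real.sin_pi_div_two,
      Real.cos_pi_div_two, Wf]; ring
  rw [h]
  calc |⟪p, sphParamE (Real.pi/2) t⟫| ≤ ‖p‖ * ‖sphParamE (Real.pi/2) t‖ :=
    abs_real_inner_le_norm _ _
  _ = 1 := by rw [hp, norm_sphParamE]; norm_num

/-! ### Derivatives -/

lemma hasDerivAt_Uf_s (p : E3) (t s : ℝ) :
    HasDerivAt (fun s' => Uf p s' t) (Usf p s t) s := by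
  have h0 : HasDerivAt (fun s' => p 0 * (Real.sin s' * Real.cos t))
      (p 0 * (Real.cos s * Real.cos t)) s := by
    simpa [mul_assoc] using (((Real.hasDerivAt_sin s).mul_const (Real.cos t)).const_mul (p 0))
  have h1 : HasDerivAt (fun s' => p 1 * (Real.sin s' * Real.sin t))
      (p 1 * (Real.cos s * Real.sin t)) s := by
    simpa [mul_assoc] using (((Real.hasDerivAt_sin s).mul_const (Real.sin t)).const_mul (p 1))
  have h2 : HasDerivAt (fun s' => p 2 * Real.cos s') (p 2 * -Real.sin s) s :=
    (Real.hasDerivAt_cos s).const_mul (p 2)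
  have := (h0.fun_add h1).fun_add h2
  refine HasDerivAt.congr_deriv this ?_
  rw [Usf]; ring

lemma hasDerivAt_Usf_s (p : E3) (t s : ℝ) :
    HasDerivAt (fun s' => Usf p s' t) (-Uf p s t) s := by
  have h0 : HasDerivAt (fun s' => p 0 * (Real.cos s' * Real.cos t))
      (p 0 * (-Real.sin s * Real.cos t)) s := by
    simpa [mul_assoc] using (((Real.hasDerivAt_cos s).mul_const (Real.cos t)).const_mul (p 0))
  have h1 : HasDerivAt (fun s' => p 1 * (Real.cos s' * Real.sin t))
      (p 1 * (-Real.sin s * Real.sin t)) s := by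
    simpa [mul_assoc] using (((Real.hasDerivAt_cos s).mul_const (Real.sin t)).const_mul (p 1))
  have h2 : HasDerivAt (fun s' => p 2 * Real.sin s') (p 2 * Real.cos s) s :=
    (Real.hasDerivAt_sin s).const_mul (p 2)
  have := (h0.fun_add h1).fun_sub h2
  refine HasDerivAt.congr_deriv this ?_
  rw [Uf]; ring

lemma hasDerivAt_Af_s (p : E3) (t s : ℝ) (hD : 1 - Uf p s t ≠ 0) :
    HasDerivAt (fun s' => Af p s' t) (Af' p s t) s := by
  have hN : HasDerivAt (fun s' => Real.sin s' * Usf p s' t)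
      (Real.cos s * Usf p s t + Real.sin s * -Uf p s t) s :=
    (Real.hasDerivAt_sin s).mul (hasDerivAt_Usf_s p t s)
  have hDd : HasDerivAt (fun s' => 1 - Uf p s' t) (-Usf p s t) s := by
    simpa using (hasDerivAt_Uf_s p t s).const_sub 1
  have heq : Af' p s t = ((Real.cos s * Usf p s t + Real.sin s * -Uf p s t) * (1 - Uf p s t)
      - Real.sin s * Usf p s t * -Usf p s t) / (1 - Uf p s t) ^ 2 := by
    rw [Af']; ring
  rw [show (fun s' => Af p s' t) = fun s' => Real.sin s' * Usf p s' t / (1 - Uf p s' t) from rfl,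
    heq]
  exact hN.div hDd hD

lemma hasDerivAt_Uf_t (p : E3) (s t : ℝ) :
    HasDerivAt (fun t' => Uf p s t') (Real.sin s * Vf p t) t := by
  have h0 : HasDerivAt (fun t' => p 0 * (Real.sin s * Real.cos t'))
      (p 0 * (Real.sin s * -Real.sin t)) t := by
    simpa using (((Real.hasDerivAt_cos t).const_mul (Real.sin s)).const_mul (p 0))
  have h1 : HasDerivAt (fun t' => p 1 * (Real.sin s * Real.sin t'))
      (p 1 * (Real.sin s * Real.cos t)) t := by
    simpa using (((Real.hasDerivAt_sin t).const_mul (Real.sin s)).const_mul (p 1))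
  have h2 : HasDerivAt (fun _ : ℝ => p 2 * Real.cos s) 0 t := hasDerivAt_const _ _
  have := (h0.fun_add h1).fun_add h2
  refine HasDerivAt.congr_deriv this ?_
  rw [Vf]; ring

lemma hasDerivAt_Vf_t (p : E3) (t : ℝ) :
    HasDerivAt (fun t' => Vf p t') (-Wf p t) t := by
  have h0 : HasDerivAt (fun t' => p 1 * Real.cos t') (p 1 * -Real.sin t) t :=
    (Real.hasDerivAt_cos t).const_mul (p 1)
  have h1 : HasDerivAt (fun t' => p 0 * Real.sin t') (p 0 * Real.cos t) t :=
    (Real.hasDerivAt_sin t).const_mul (p 0)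
  have := h0.fun_sub h1
  refine HasDerivAt.congr_deriv this ?_
  rw [Wf]; ring

lemma hasDerivAt_Bf_t (p : E3) (s t : ℝ) (hD : 1 - Uf p s t ≠ 0) :
    HasDerivAt (fun t' => Bf p s t') (Bf' p s t) t := by
  have hN : HasDerivAt (fun t' => -Vf p t') (Wf p t) t := by
    simpa using (hasDerivAt_Vf_t p t).fun_neg
  have hDd : HasDerivAt (fun t' => 1 - Uf p s t') (-(Real.sin s * Vf p t)) t := by
    simpa using (hasDerivAt_Uf_t p s t).const_sub 1
  have heq : Bf' p s t = (Wf p t * (1 - Uf p s t)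
      - -Vf p t * -(Real.sin s * Vf p t)) / (1 - Uf p s t) ^ 2 := by
    rw [Bf']; ring
  rw [show (fun t' => Bf p s t') = fun t' => -Vf p t' / (1 - Uf p s t') from rfl, heq]
  exact hN.div hDd hD

/-! ### Bounds -/

lemma Af'_bound (p : E3) (hp : ‖p‖ = 1) {s t m : ℝ} (hm : 0 < m) (hD : m ≤ 1 - Uf p s t) :
    |Af' p s t| ≤ 5 / m^2 := by
  have hU := abs_le.1 (abs_Uf_le p hp s t)
  have hUs := abs_le.1 (abs_Usf_le p hp s t)
  have hU' := abs_Uf_le p hp s t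
  have hUs' := abs_Usf_le p hp s t
  have h1 : |Real.cos s * Usf p s t| ≤ 1 := by
    rw [abs_mul]
    exact mul_le_one₀ (Real.abs_cos_le_one s) (abs_nonneg _) hUs'
  have h2 : |Real.sin s * Uf p s t| ≤ 1 := by
    rw [abs_mul]
    exact mul_le_one₀ (Real.abs_sin_le_one s) (abs_nonneg _) hU'
  have hA : |Real.cos s * Usf p s t - Real.sin s * Uf p s t| ≤ 2 :=
    (abs_sub _ _).trans (by linarith)
  have hDD : |1 - Uf p s t| ≤ 2 := (abs_sub _ _).trans (by norm_num; linarith)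
  have hB : |Real.sin s * Usf p s t * Usf p s t| ≤ 1 := by
    rw [abs_mul, abs_mul]
    exact mul_le_one₀ (mul_le_one₀ (Real.abs_sin_le_one s) (abs_nonneg _) hUs') (abs_nonneg _) hUs'
  have hNum : |(Real.cos s * Usf p s t - Real.sin s * Uf p s t) * (1 - Uf p s t)
      + Real.sin s * Usf p s t * Usf p s t| ≤ 5 := by
    calc _ ≤ |(Real.cos s * Usf p s t - Real.sin s * Uf p s t) * (1 - Uf p s t)|
          + |Real.sin s * Usf p s t * Usf p s t| := abs_add_le _ _
      _ = |Real.cos s * Usf p s t - Real.sin s * Uf p s t| * |1 - Uf p s t|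
          + |Real.sin s * Usf p s t * Usf p s t| := by rw [abs_mul]
      _ ≤ 5 := by nlinarith [abs_nonneg (Real.cos s * Usf p s t - Real.sin s * Uf p s t),
          abs_nonneg (1 - Uf p s t)]
  rw [Af', abs_div, abs_pow, sq_abs]
  exact div_le_div₀ (by norm_num) hNum (by positivity) (by nlinarith)

lemma Bf'_bound (p : E3) (hp : ‖p‖ = 1) {s t m : ℝ} (hm : 0 < m) (hD : m ≤ 1 - Uf p s t) :
    |Bf' p s t| ≤ 3 / m^2 := by
  have hU := abs_le.1 (abs_Uf_le p hp s t)
  have hV := abs_le.1 (abs_Vf_le p hp t)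
  have hW := abs_le.1 (abs_Wf_le p hp t)
  have hU' := abs_Uf_le p hp s t
  have hV' := abs_Vf_le p hp t
  have hW' := abs_Wf_le p hp t
  have hDD : |1 - Uf p s t| ≤ 2 := (abs_sub _ _).trans (by norm_num; linarith)
  have h1 : |Wf p t * (1 - Uf p s t)| ≤ 2 := by
    rw [abs_mul]
    calc |Wf p t| * |1 - Uf p s t| ≤ 1 * 2 := by
          exact mul_le_mul hW' hDD (abs_nonneg _) zero_le_one
      _ = 2 := by norm_num
  have h2 : |Real.sin s * (Vf p t)^2| ≤ 1 := by
    rw [abs_mul, abs_pow]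
    exact mul_le_one₀ (Real.abs_sin_le_one s) (by positivity)
      (by nlinarith [abs_nonneg (Vf p t)])
  have hNum : |Wf p t * (1 - Uf p s t) - Real.sin s * (Vf p t)^2| ≤ 3 :=
    (abs_sub _ _).trans (by linarith)
  rw [Bf', abs_div, abs_pow, sq_abs]
  exact div_le_div₀ (by norm_num) hNum (by positivity) (by nlinarith)

/-! ### Geometry of the sphere -/

lemma one_sub_inner (p q : E3) (hp : ‖p‖ = 1) (hq : ‖q‖ = 1) :
    1 - ⟪p, q⟫ = ‖p - q‖^2 / 2 := by
  have h := norm_sub_sq_real p q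
  rw [hp, hq] at h
  linarith

lemma lagrange (p q : E3) : ‖crossE p q‖^2 = ‖p‖^2 * ‖q‖^2 - ⟪p, q⟫^2 := by
  rw [normsq3 (crossE p q), crossE_apply0, crossE_apply1, crossE_apply2, inner3,
    normsq3 p, normsq3 q]
  ring

lemma norm_xiVec_le (p q : E3) (hp : ‖p‖ = 1) (hq : ‖q‖ = 1) :
    ‖xiVec p q‖ ≤ 2 * (dist p q)⁻¹ := by
  rcases eq_or_ne p q with rfl | hne
  · have hc : crossE p p = 0 := by
      apply PiLp.ext
      intro i
      fin_cases i <;>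
        simp [crossE_apply0, crossE_apply1, crossE_apply2]  <;> ring
    simp [xiVec, hc]
  · have hd : 0 < dist p q := dist_pos.2 hne
    have hD : 1 - ⟪p, q⟫ = dist p q ^ 2 / 2 := by
      rw [one_sub_inner p q hp hq, dist_eq_norm]
    have hDpos : 0 < 1 - ⟪p, q⟫ := by rw [hD]; positivity
    have hu : ⟪p, q⟫ ≤ 1 := by
      calc ⟪p, q⟫ ≤ ‖p‖ * ‖q‖ := real_inner_le_norm _ _
        _ = 1 := by rw [hp, hq]; norm_num
    have hu' : -1 ≤ ⟪p, q⟫ := by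
      have habs := abs_real_inner_le_norm p q
      rw [hp, hq, one_mul] at habs
      exact (abs_le.1 habs).1
    have hcross : ‖crossE p q‖ ≤ dist p q := by
      have h2 : ‖crossE p q‖^2 ≤ dist p q ^ 2 := by
        rw [lagrange p q, hp, hq]
        nlinarith [hD]
      nlinarith [norm_nonneg (crossE p q), dist_nonneg (x := p) (y := q)]
    have : ‖xiVec p q‖ = (1 - ⟪p, q⟫)⁻¹ * ‖crossE p q‖ := by
      rw [xiVec, norm_neg, norm_smul, Real.norm_eq_abs, abs_of_pos (inv_pos.2 hDpos)]
    rw [this, hD]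
    rw [show (dist p q ^ 2 / 2)⁻¹ = 2 / dist p q ^ 2 by field_simp]
    rw [div_mul_eq_mul_div, mul_comm]
    rw [div_le_iff₀ (by positivity)]
    calc ‖crossE p q‖ * 2 ≤ dist p q * 2 := by nlinarith
      _ = 2 * (dist p q)⁻¹ * dist p q ^ 2 := by field_simp

/-! ### Measure bounds -/

lemma volume_closedBall3 (c : E3) (R : ℝ) :
    volume (Metric.closedBall c R) ≤ ENNReal.ofReal (8 * R^3) := by
  rcases le_or_gt R 0 with hR | hR
  · rcases lt_or_eq_of_le hR with hR' | rfl
    · rw [Metric.closedBall_eq_empty.2 hR']; simp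
    · simp [Metric.closedBall_zero]
  · rw [EuclideanSpace.volume_closedBall]
    have hcard : (Fintype.card (Fin 3) : ℝ) = 3 := by simp
    have hG : Real.Gamma ((Fintype.card (Fin 3) : ℝ) / 2 + 1) = 3/4 * Real.sqrt Real.pi := by
      rw [hcard]
      have : (3:ℝ)/2 + 1 = (1/2 + 1) + 1 := by norm_num
      rw [this, Real.Gamma_add_one (by norm_num), Real.Gamma_add_one (by norm_num),
        Real.Gamma_one_half_eq]
      ring
    have hsq : Real.sqrt Real.pi ^ Fintype.card (Fin 3)
        / Real.Gamma ((Fintype.card (Fin 3) : ℝ) / 2 + 1) = 4/3 * Real.pi := by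
      rw [hG]
      have h3 : (Fintype.card (Fin 3)) = 3 := by simp
      rw [h3]
      have hpi := Real.pi_pos
      have hsqrt : Real.sqrt Real.pi ^ 3 = Real.pi * Real.sqrt Real.pi := by
        have h2 : Real.sqrt Real.pi ^ 2 = Real.pi := Real.sq_sqrt hpi.le
        rw [pow_succ, h2]
      rw [hsqrt]
      have hs0 : 0 < Real.sqrt Real.pi := Real.sqrt_pos.2 hpi
      field_simp
    rw [hsq]
    calc ENNReal.ofReal R ^ Fintype.card (Fin 3) * ENNReal.ofReal (4/3 * Real.pi)
        = ENNReal.ofReal (R^3 * (4/3 * Real.pi)) := by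
          rw [show Fintype.card (Fin 3) = 3 by simp, ← ENNReal.ofReal_pow hR.le,
            ← ENNReal.ofReal_mul (by positivity)]
      _ ≤ ENNReal.ofReal (8 * R^3) := by
          apply ENNReal.ofReal_le_ofReal
          nlinarith [Real.pi_le_four, Real.pi_pos, pow_pos hR 3]

lemma cap_bound (q : E3) (hq : ‖q‖ = 1) (r : ℝ) (h0 : 0 < r) (hr : r ≤ 1) :
    sphereMeasure {p : S2 | dist (p : E3) q ≤ r} ≤ ENNReal.ofReal (384 * r^2) := by
  classical
  set capS : Set S2 := {p : S2 | dist (p : E3) q ≤ r} with hcapS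
  have hms : MeasurableSet capS := by
    have : capS = Subtype.val ⁻¹' Metric.closedBall q r := rfl
    rw [this]
    exact measurable_subtype_coe measurableSet_closedBall
  have hdim : Module.finrank ℝ E3 = 3 := finrank_euclideanSpace_fin
  rw [sphereMeasure, Measure.toSphere_apply' _ hms, hdim]
  set n : ℕ := ⌊1/r⌋₊ + 1 with hn
  have hsub : Set.Ioo (0:ℝ) 1 • (Subtype.val '' capS) ⊆
      ⋃ k ∈ Finset.range n, Metric.closedBall (((k : ℝ) * r) • q) (2*r) := by
    rintro x hx
    rw [Set.mem_smul] at hx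
    obtain ⟨t, ht, y, hy, rfl⟩ := hx
    obtain ⟨p, hpcap, rfl⟩ := hy
    have hpnorm : ‖(p : E3)‖ = 1 := by
      have := p.2
      simpa [S2, mem_sphere_iff_norm] using this
    have hpq : dist (p : E3) q ≤ r := hpcap
    have ht0 : 0 < t := ht.1
    have ht1 : t < 1 := ht.2
    set k : ℕ := ⌊t/r⌋₊ with hk
    have hkn : k ∈ Finset.range n := by
      rw [Finset.mem_range, hn, Nat.lt_succ_iff]
      refine Nat.floor_le_floor ?_
      gcongr
    have hk_le : (k:ℝ) * r ≤ t := by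
      have h1 : (k:ℝ) ≤ t/r := Nat.floor_le (by positivity)
      calc (k:ℝ) * r ≤ (t/r) * r := by nlinarith
        _ = t := by field_simp
    have ht_lt : t < ((k:ℝ)+1) * r := by
      have h1 : t/r < (k:ℝ)+1 := Nat.lt_floor_add_one (t/r)
      calc t = (t/r) * r := by field_simp
        _ < ((k:ℝ)+1) * r := by nlinarith
    have hdist : t • (p:E3) ∈ Metric.closedBall (((k:ℝ)*r) • q) (2*r) := by
      rw [Metric.mem_closedBall]
      have h1 : dist (t • (p:E3)) (t • q) ≤ r := by
        rw [dist_smul₀, Real.norm_eq_abs, abs_of_pos ht0]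
        nlinarith [dist_nonneg (x := (p:E3)) (y := q)]
      have h2 : dist (t • q) (((k:ℝ)*r) • q) ≤ r := by
        rw [dist_eq_norm, ← sub_smul, norm_smul, hq, mul_one, Real.norm_eq_abs,
          abs_of_nonneg (by linarith)]
        linarith
      calc dist (t • (p:E3)) (((k:ℝ)*r) • q)
          ≤ dist (t • (p:E3)) (t • q) + dist (t • q) (((k:ℝ)*r) • q) := dist_triangle _ _ _
        _ ≤ 2*r := by linarith
    exact Set.mem_biUnion hkn hdist
  have hvol : volume (Set.Ioo (0:ℝ) 1 • (Subtype.val '' capS)) ≤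
      (n:ℝ≥0∞) * ENNReal.ofReal (64 * r^3) := by
    calc volume (Set.Ioo (0:ℝ) 1 • (Subtype.val '' capS))
        ≤ volume (⋃ k ∈ Finset.range n, Metric.closedBall (((k : ℝ) * r) • q) (2*r)) :=
          measure_mono hsub
      _ ≤ ∑ k ∈ Finset.range n, volume (Metric.closedBall (((k : ℝ) * r) • q) (2*r)) :=
          measure_biUnion_finset_le _ _
      _ ≤ ∑ _k ∈ Finset.range n, ENNReal.ofReal (64 * r^3) := by
          refine Finset.sum_le_sum fun k _ => ?_
          refine (volume_closedBall3 _ _).trans ?_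
          apply ENNReal.ofReal_le_ofReal
          nlinarith [pow_pos h0 3]
      _ = (n:ℝ≥0∞) * ENNReal.ofReal (64 * r^3) := by
          rw [Finset.sum_const, Finset.card_range, nsmul_eq_mul]
  have hn_le : (n : ℝ≥0∞) ≤ ENNReal.ofReal (2/r) := by
    rw [← ENNReal.ofReal_natCast]
    apply ENNReal.ofReal_le_ofReal
    have h1 : (⌊1/r⌋₊ : ℝ) ≤ 1/r := Nat.floor_le (by positivity)
    have h2 : (1:ℝ) ≤ 1/r := one_le_one_div h0 hr
    have h3 : (2:ℝ)/r = 1/r + 1/r := by ring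
    rw [hn]
    push_cast
    linarith
  calc ((3:ℕ):ℝ≥0∞) * volume (Set.Ioo (0:ℝ) 1 • (Subtype.val '' capS))
      ≤ 3 * ((n:ℝ≥0∞) * ENNReal.ofReal (64 * r^3)) := by
        exact mul_le_mul_right hvol _
    _ ≤ 3 * (ENNReal.ofReal (2/r) * ENNReal.ofReal (64 * r^3)) := by
        exact mul_le_mul_right (mul_le_mul_left hn_le _) _
    _ = ENNReal.ofReal (3 * ((2/r) * (64 * r^3))) := by
        rw [← ENNReal.ofReal_mul (by positivity), ← ENNReal.ofReal_ofNat 3,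
          ← ENNReal.ofReal_mul (by norm_num)]
    _ = ENNReal.ofReal (384 * r^2) := by
        congr 1
        field_simp
        ring

lemma norm_coe_S2 (p : S2) : ‖(p : E3)‖ = 1 := mem_sphere_zero_iff_norm.1 p.2

instance : IsFiniteMeasure sphereMeasure := by
  unfold sphereMeasure; infer_instance

lemma sphereMeasure_univ_le : sphereMeasure Set.univ ≤ ENNReal.ofReal 24 := by
  rw [sphereMeasure, Measure.toSphere_apply_univ, finrank_euclideanSpace_fin]
  calc ((3:ℕ):ℝ≥0∞) * volume (Metric.ball (0:E3) 1)
      ≤ 3 * volume (Metric.closedBall (0:E3) 1) :=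
        mul_le_mul_right (measure_mono Metric.ball_subset_closedBall) _
    _ ≤ 3 * ENNReal.ofReal (8 * 1^3) := mul_le_mul_right (volume_closedBall3 _ _) _
    _ ≤ ENNReal.ofReal 24 := by
        rw [← ENNReal.ofReal_ofNat 3, ← ENNReal.ofReal_mul (by norm_num)]
        norm_num

lemma lintegral_invdist (q : E3) (hq : ‖q‖ = 1) :
    ∫⁻ p : S2, ENNReal.ofReal ((dist (p : E3) q)⁻¹) ∂sphereMeasure ≤ ENNReal.ofReal 1584 := by
  classical
  set caps : ℕ → Set S2 := fun k => {p : S2 | dist (p : E3) q ≤ (1/2:ℝ)^k} with hcaps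
  have hmeascap : ∀ k, MeasurableSet (caps k) := fun k =>
    measurable_subtype_coe measurableSet_closedBall
  set h : S2 → ℝ≥0∞ := fun p => ∑' k : ℕ, (caps k).indicator
    (fun _ => ENNReal.ofReal (2 * 2^k)) p with hh
  have hpt : ∀ p : S2, ENNReal.ofReal ((dist (p : E3) q)⁻¹) ≤ 2 + h p := by
    intro p
    set d := dist (p : E3) q with hd
    have hd0 : 0 ≤ d := dist_nonneg
    rcases le_or_gt 1 d with hd1 | hd1
    · have : ENNReal.ofReal d⁻¹ ≤ 1 := by
        rw [← ENNReal.ofReal_one]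
        exact ENNReal.ofReal_le_ofReal (inv_le_one_of_one_le₀ hd1)
      calc ENNReal.ofReal d⁻¹ ≤ 1 := this
        _ ≤ 2 + h p := le_trans (by norm_num : (1:ℝ≥0∞) ≤ 2) le_self_add
    · rcases eq_or_lt_of_le hd0 with hd0' | hd0'
      · rw [← hd0']
        simp
      · have hex : ∃ k : ℕ, (1/2:ℝ)^(k+1) < d := by
          obtain ⟨m, hm⟩ := exists_pow_lt_of_lt_one hd0' (by norm_num : (1/2:ℝ) < 1)
          exact ⟨m, lt_of_le_of_lt (pow_le_pow_of_le_one (by norm_num) (by norm_num)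
            (Nat.le_succ m)) hm⟩
        set n := Nat.find hex with hn
        have hn1 : (1/2:ℝ)^(n+1) < d := Nat.find_spec hex
        have hn2 : d ≤ (1/2:ℝ)^n := by
          rcases Nat.eq_zero_or_pos n with h0 | h0
          · rw [h0]; simpa using hd1.le
          · have hlt : n - 1 < n := Nat.sub_lt h0 one_pos
            have hmin := Nat.find_min hex hlt
            have hrw : n - 1 + 1 = n := Nat.succ_pred_eq_of_pos h0
            rw [hrw] at hmin
            exact not_lt.1 hmin
        have hpmem : p ∈ caps n := hn2
        have hinv : d⁻¹ ≤ 2 * 2^n := by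
          have h12 : (1/2:ℝ)^(n+1) = ((2:ℝ)^(n+1))⁻¹ := by
            rw [one_div, inv_pow]
          rw [h12] at hn1
          have := inv_strictAnti₀ (by positivity) hn1
          rw [inv_inv] at this
          calc d⁻¹ ≤ (2:ℝ)^(n+1) := this.le
            _ = 2 * 2^n := by rw [pow_succ]; ring
        calc ENNReal.ofReal d⁻¹ ≤ ENNReal.ofReal (2 * 2^n) := ENNReal.ofReal_le_ofReal hinv
          _ = (caps n).indicator (fun _ => ENNReal.ofReal (2 * 2^n)) p := by
              rw [Set.indicator_of_mem hpmem]
          _ ≤ h p := ENNReal.le_tsum n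
          _ ≤ 2 + h p := le_add_self
  calc ∫⁻ p : S2, ENNReal.ofReal ((dist (p : E3) q)⁻¹) ∂sphereMeasure
      ≤ ∫⁻ p : S2, (2 + h p) ∂sphereMeasure := lintegral_mono hpt
    _ = 2 * sphereMeasure Set.univ + ∫⁻ p, h p ∂sphereMeasure := by
        rw [lintegral_add_left measurable_const, lintegral_const]
    _ ≤ 2 * ENNReal.ofReal 24 + ENNReal.ofReal 1536 := by
        refine add_le_add (mul_le_mul_right sphereMeasure_univ_le _) ?_
        have hlt : ∫⁻ p, h p ∂sphereMeasure
            = ∑' k : ℕ, ∫⁻ p, (caps k).indicator (fun _ => ENNReal.ofReal (2 * 2^k)) p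
              ∂sphereMeasure := by
          rw [hh]
          exact lintegral_tsum fun k =>
            (measurable_const.indicator (hmeascap k)).aemeasurable
        rw [hlt]
        have hterm : ∀ k : ℕ, ∫⁻ p, (caps k).indicator (fun _ => ENNReal.ofReal (2 * 2^k)) p
            ∂sphereMeasure ≤ ENNReal.ofReal 768 * (ENNReal.ofReal (1/2))^k := by
          intro k
          rw [lintegral_indicator_const (hmeascap k)]
          have hcap := cap_bound q hq ((1/2:ℝ)^k) (by positivity)
            (pow_le_one₀ (by norm_num) (by norm_num))
          calc ENNReal.ofReal (2 * 2^k) * sphereMeasure (caps k)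
              ≤ ENNReal.ofReal (2 * 2^k) * ENNReal.ofReal (384 * ((1/2:ℝ)^k)^2) :=
                mul_le_mul_right hcap _
            _ = ENNReal.ofReal (768 * (1/2:ℝ)^k) := by
                rw [← ENNReal.ofReal_mul (by positivity)]
                congr 1
                have h2 : (2:ℝ)^k * (1/2:ℝ)^k = 1 := by
                  rw [← mul_pow]; norm_num
                linear_combination (768 * (1/2:ℝ)^k) * h2
            _ = ENNReal.ofReal 768 * (ENNReal.ofReal (1/2))^k := by
                rw [← ENNReal.ofReal_pow (by norm_num), ← ENNReal.ofReal_mul (by norm_num)]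
        calc ∑' k : ℕ, ∫⁻ p, (caps k).indicator (fun _ => ENNReal.ofReal (2 * 2^k)) p
              ∂sphereMeasure
            ≤ ∑' k : ℕ, ENNReal.ofReal 768 * (ENNReal.ofReal (1/2))^k :=
              ENNReal.tsum_le_tsum hterm
          _ = ENNReal.ofReal 768 * (1 - ENNReal.ofReal (1/2))⁻¹ := by
              rw [ENNReal.tsum_mul_left, ENNReal.tsum_geometric]
          _ = ENNReal.ofReal 1536 := by
              have h12 : ENNReal.ofReal (1/2:ℝ) = 2⁻¹ := by
                rw [one_div, ENNReal.ofReal_inv_of_pos (by norm_num)]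
                norm_num
              rw [h12, ENNReal.one_sub_inv_two, inv_inv]
              rw [show ENNReal.ofReal 1536 = ENNReal.ofReal 768 * 2 by
                rw [← ENNReal.ofReal_ofNat 2, ← ENNReal.ofReal_mul (by norm_num)]; norm_num]
    _ ≤ ENNReal.ofReal 1584 := by
        rw [← ENNReal.ofReal_ofNat 2, ← ENNReal.ofReal_mul (by norm_num),
          ← ENNReal.ofReal_add (by norm_num) (by norm_num)]
        norm_num

lemma dist_inv_measurable (q : E3) :
    Measurable (fun p : S2 => (dist (p : E3) q)⁻¹) :=
  ((continuous_subtype_val.dist continuous_const).measurable).inv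

lemma integral_invdist_le (q : S2) :
    ∫ p : S2, (dist (p : E3) (q : E3))⁻¹ ∂sphereMeasure ≤ 1584 := by
  rw [integral_eq_lintegral_of_nonneg_ae (Filter.Eventually.of_forall fun p => by positivity)
    (dist_inv_measurable _).aestronglyMeasurable]
  exact ENNReal.toReal_le_of_le_ofReal (by norm_num) (lintegral_invdist _ (norm_coe_S2 q))

/-! ### Integrability and continuity helpers -/

lemma continuous_coord (i : Fin 3) : Continuous fun p : S2 => (p : E3) i :=
  (EuclideanSpace.proj (𝕜 := ℝ) i).continuous.comp continuous_subtype_val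

lemma measurable_coord (i : Fin 3) : Measurable fun p : S2 => (p : E3) i :=
  (continuous_coord i).measurable

lemma measurable_Uf (s t : ℝ) : Measurable fun p : S2 => Uf (p:E3) s t := by
  unfold Uf
  exact (((measurable_coord 0).mul measurable_const).add
    ((measurable_coord 1).mul measurable_const)).add ((measurable_coord 2).mul measurable_const)

lemma measurable_Usf (s t : ℝ) : Measurable fun p : S2 => Usf (p:E3) s t := by
  unfold Usf
  exact (((measurable_coord 0).mul measurable_const).add
    ((measurable_coord 1).mul measurable_const)).sub ((measurable_coord 2).mul measurable_const)

lemma measurable_Vf (t : ℝ) : Measurable fun p : S2 => Vf (p:E3) t := by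
  unfold Vf
  exact ((measurable_coord 1).mul measurable_const).sub ((measurable_coord 0).mul measurable_const)

lemma measurable_Wf (t : ℝ) : Measurable fun p : S2 => Wf (p:E3) t := by
  unfold Wf
  exact ((measurable_coord 0).mul measurable_const).add ((measurable_coord 1).mul measurable_const)

lemma measurable_Af (s t : ℝ) : Measurable fun p : S2 => Af (p:E3) s t := by
  unfold Af
  exact ((measurable_Usf s t).const_mul _).div (measurable_const.sub (measurable_Uf s t))

lemma measurable_Bf (s t : ℝ) : Measurable fun p : S2 => Bf (p:E3) s t := by
  unfold Bf
  exact (measurable_Vf t).neg.div (measurable_const.sub (measurable_Uf s t))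

lemma measurable_Af' (s t : ℝ) : Measurable fun p : S2 => Af' (p:E3) s t := by
  unfold Af'
  exact ((((measurable_Usf s t).const_mul _).sub ((measurable_Uf s t).const_mul _)).mul
    (measurable_const.sub (measurable_Uf s t))).add
      (((measurable_Usf s t).const_mul _).mul (measurable_Usf s t)) |>.div
        ((measurable_const.sub (measurable_Uf s t)).pow_const 2)

lemma measurable_Bf' (s t : ℝ) : Measurable fun p : S2 => Bf' (p:E3) s t := by
  unfold Bf'
  exact ((measurable_Wf t).mul (measurable_const.sub (measurable_Uf s t))).sub
    (((measurable_Vf t).pow_const 2).const_mul _) |>.div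
      ((measurable_const.sub (measurable_Uf s t)).pow_const 2)

lemma Af_bound (p : E3) (hp : ‖p‖ = 1) {s t m : ℝ} (hm : 0 < m) (hD : m ≤ 1 - Uf p s t) :
    |Af p s t| ≤ 1 / m := by
  have h1 : |Real.sin s * Usf p s t| ≤ 1 := by
    rw [abs_mul]
    exact mul_le_one₀ (Real.abs_sin_le_one s) (abs_nonneg _) (abs_Usf_le p hp s t)
  rw [Af, abs_div, abs_of_pos (lt_of_lt_of_le hm hD)]
  exact div_le_div₀ zero_le_one h1 hm hD

lemma Bf_bound (p : E3) (hp : ‖p‖ = 1) {s t m : ℝ} (hm : 0 < m) (hD : m ≤ 1 - Uf p s t) :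
    |Bf p s t| ≤ 1 / m := by
  rw [Bf, abs_div, abs_neg, abs_of_pos (lt_of_lt_of_le hm hD)]
  exact div_le_div₀ zero_le_one (abs_Vf_le p hp t) hm hD

lemma continuous_crossE_left (v : E3) : Continuous fun x : E3 => crossE x v := by
  unfold crossE
  refine (PiLp.continuous_toLp _ _).comp (continuous_pi fun i => ?_)
  have h : ∀ j : Fin 3, Continuous fun x : E3 => x j := fun j =>
    (EuclideanSpace.proj (𝕜 := ℝ) j).continuous
  fin_cases i
  · show Continuous fun x : E3 => x 1 * v 2 - x 2 * v 1
    exact ((h 1).mul continuous_const).sub ((h 2).mul continuous_const)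
  · show Continuous fun x : E3 => x 2 * v 0 - x 0 * v 2
    exact ((h 2).mul continuous_const).sub ((h 0).mul continuous_const)
  · show Continuous fun x : E3 => x 0 * v 1 - x 1 * v 0
    exact ((h 0).mul continuous_const).sub ((h 1).mul continuous_const)

lemma measurable_xiVec (q' : E3) : Measurable fun p : S2 => xiVec (p:E3) q' := by
  have hin : Continuous fun p : S2 => ⟪(p:E3), q'⟫ :=
    continuous_subtype_val.inner continuous_const
  have hcr : Continuous fun p : S2 => crossE (p:E3) q' :=
    (continuous_crossE_left q').comp continuous_subtype_val
  unfold xiVec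
  exact (((measurable_const.sub hin.measurable).inv).smul hcr.measurable).neg

lemma integrableOn_xiVec (E : Set S2) (hE : MeasurableSet E) (q' : E3)
    {m : ℝ} (hm : 0 < m) (hq' : ‖q'‖ = 1)
    (hne : ∀ p ∈ E, m ≤ 1 - ⟪(p:E3), q'⟫) :
    IntegrableOn (fun p : S2 => xiVec (p:E3) q') E sphereMeasure := by
  refine Integrable.mono' (integrable_const (2 / Real.sqrt (2*m)))
    (measurable_xiVec q').aestronglyMeasurable ?_
  rw [ae_restrict_iff' hE]
  refine Filter.Eventually.of_forall fun p hp => ?_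
  have hpn := norm_coe_S2 p
  have h5 := one_sub_inner (p:E3) q' hpn hq'
  have h1 : 2*m ≤ ‖(p:E3) - q'‖^2 := by
    have h2 := hne p hp
    nlinarith
  have hd : Real.sqrt (2*m) ≤ dist (p:E3) q' := by
    rw [dist_eq_norm]
    calc Real.sqrt (2*m) ≤ Real.sqrt (‖(p:E3) - q'‖^2) := Real.sqrt_le_sqrt h1
      _ = ‖(p:E3) - q'‖ := Real.sqrt_sq (norm_nonneg _)
  have hsp : 0 < Real.sqrt (2*m) := Real.sqrt_pos.2 (by linarith)
  calc ‖xiVec (p:E3) q'‖ ≤ 2 * (dist (p:E3) q')⁻¹ := norm_xiVec_le _ _ hpn hq'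
    _ ≤ 2 * (Real.sqrt (2*m))⁻¹ := by
        exact mul_le_mul_of_nonneg_left (inv_anti₀ hsp hd) (by norm_num)
    _ = 2 / Real.sqrt (2*m) := by rw [div_eq_mul_inv]

lemma continuous_sphParamE_left (t : ℝ) : Continuous fun s => sphParamE s t := by
  unfold sphParamE
  refine (PiLp.continuous_toLp _ _).comp (continuous_pi fun i => ?_)
  fin_cases i
  · show Continuous fun s => Real.sin s * Real.cos t
    exact Real.continuous_sin.mul continuous_const
  · show Continuous fun s => Real.sin s * Real.sin t
    exact Real.continuous_sin.mul continuous_const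
  · show Continuous fun s => Real.cos s
    exact Real.continuous_cos

lemma continuous_sphParamE_right (s : ℝ) : Continuous fun t => sphParamE s t := by
  unfold sphParamE
  refine (PiLp.continuous_toLp _ _).comp (continuous_pi fun i => ?_)
  fin_cases i
  · show Continuous fun t => Real.sin s * Real.cos t
    exact continuous_const.mul Real.continuous_cos
  · show Continuous fun t => Real.sin s * Real.sin t
    exact continuous_const.mul Real.continuous_sin
  · show Continuous fun t => Real.cos s
    exact continuous_const

/-! ### Derivative of the averaged form -/

lemma deriv_part_phi (E : Set S2) (hE : IsClosed E) (hEne : E.Nonempty) (θ φ : ℝ)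
    (hq : sphParamE θ φ ∉ Subtype.val '' E) :
    Integrable (fun p : S2 => Af' (p:E3) θ φ) (sphereMeasure.restrict E) ∧
    deriv (fun s => ⟪xiAvg E (sphParamE s φ), sphPhiE s φ⟫) θ =
      (sphereMeasure E).toReal⁻¹ * ∫ p in E, Af' (p:E3) θ φ ∂sphereMeasure := by
  have hAcl : IsClosed (Subtype.val '' E) :=
    ((hE.isCompact).image continuous_subtype_val).isClosed
  have hAne : (Subtype.val '' E).Nonempty := hEne.image _
  set r := Metric.infDist (sphParamE θ φ) (Subtype.val '' E) with hrdef
  have hr0 : 0 < r := (hAcl.notMem_iff_infDist_pos hAne).1 hq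
  obtain ⟨ε, hε0, hball⟩ := Metric.continuous_iff.1 (continuous_sphParamE_left φ) θ (r/2)
    (by linarith)
  set m := r^2/8 with hmdef
  have hm : 0 < m := by positivity
  have hkey : ∀ s ∈ Metric.ball θ ε, ∀ p ∈ E, m ≤ 1 - Uf (p:E3) s φ := by
    intro s hs p hp
    have h1 : dist (sphParamE s φ) (sphParamE θ φ) < r/2 := hball s (Metric.mem_ball.1 hs)
    have h2 : r ≤ Metric.infDist (sphParamE s φ) (Subtype.val '' E)
        + dist (sphParamE θ φ) (sphParamE s φ) := Metric.infDist_le_infDist_add_dist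
    have h3 : Metric.infDist (sphParamE s φ) (Subtype.val '' E) ≤
        dist (sphParamE s φ) (p:E3) := Metric.infDist_le_dist_of_mem ⟨p, hp, rfl⟩
    have h4 : r/2 ≤ dist (sphParamE s φ) (p:E3) := by
      rw [dist_comm (sphParamE θ φ)] at h2
      linarith
    have h5 := one_sub_inner (p:E3) (sphParamE s φ) (norm_coe_S2 p) (norm_sphParamE s φ)
    rw [← Uf_eq, h5, ← dist_eq_norm]
    rw [dist_comm] at h4
    have := dist_nonneg (x := (p:E3)) (y := sphParamE s φ)
    rw [hmdef]
    nlinarith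
  set k := (sphereMeasure E).toReal⁻¹ with hkdef
  have hev : (fun s => ⟪xiAvg E (sphParamE s φ), sphPhiE s φ⟫) =ᶠ[nhds θ]
      (fun s => k * ∫ p in E, Af (p:E3) s φ ∂sphereMeasure) := by
    filter_upwards [Metric.ball_mem_nhds θ hε0] with s hs
    have hint := integrableOn_xiVec E hE.measurableSet (sphParamE s φ) hm
      (norm_sphParamE s φ) (fun p hp => by rw [Uf_eq]; exact hkey s hs p hp)
    rw [xiAvg, real_inner_smul_left, hkdef]
    congr 1
    calc ⟪∫ p in E, xiVec (p:E3) (sphParamE s φ) ∂sphereMeasure, sphPhiE s φ⟫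
        = ∫ p in E, ⟪sphPhiE s φ, xiVec (p:E3) (sphParamE s φ)⟫ ∂sphereMeasure := by
          rw [real_inner_comm, ← integral_inner hint]
      _ = ∫ p in E, Af (p:E3) s φ ∂sphereMeasure :=
          integral_congr_ae (Filter.Eventually.of_forall fun p => by
            show ⟪sphPhiE s φ, xiVec (p:E3) (sphParamE s φ)⟫ = Af (p:E3) s φ
            rw [real_inner_comm, Af_eq])
  have hdom := hasDerivAt_integral_of_dominated_loc_of_deriv_le
    (μ := sphereMeasure.restrict E) (F := fun s (p:S2) => Af (p:E3) s φ)
    (F' := fun s (p:S2) => Af' (p:E3) s φ) (x₀ := θ) (bound := fun _ => 5/m^2) (Metric.ball_mem_nhds θ hε0)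
    (Filter.Eventually.of_forall fun s => (measurable_Af s φ).aestronglyMeasurable)
    (by
      refine Integrable.mono' (integrable_const (1/m))
        (measurable_Af θ φ).aestronglyMeasurable ?_
      rw [ae_restrict_iff' hE.measurableSet]
      exact Filter.Eventually.of_forall fun p hp => by
        rw [Real.norm_eq_abs]
        exact Af_bound (p:E3) (norm_coe_S2 p) hm (hkey θ (Metric.mem_ball_self hε0) p hp))
    ((measurable_Af' θ φ).aestronglyMeasurable)
    (by
      rw [ae_restrict_iff' hE.measurableSet]
      exact Filter.Eventually.of_forall fun p hp => fun s hs => by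
        rw [Real.norm_eq_abs]
        exact Af'_bound (p:E3) (norm_coe_S2 p) hm (hkey s hs p hp))
    (integrable_const _)
    (by
      rw [ae_restrict_iff' hE.measurableSet]
      exact Filter.Eventually.of_forall fun p hp => fun s hs =>
        hasDerivAt_Af_s (p:E3) φ s (lt_of_lt_of_le hm (hkey s hs p hp)).ne')
  refine ⟨hdom.1, ?_⟩
  rw [hev.deriv_eq]
  exact (hdom.2.const_mul k).deriv

lemma deriv_part_theta (E : Set S2) (hE : IsClosed E) (hEne : E.Nonempty) (θ φ : ℝ)
    (hq : sphParamE θ φ ∉ Subtype.val '' E) :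
    Integrable (fun p : S2 => Bf' (p:E3) θ φ) (sphereMeasure.restrict E) ∧
    deriv (fun t => ⟪xiAvg E (sphParamE θ t), sphThetaE θ t⟫) φ =
      (sphereMeasure E).toReal⁻¹ * ∫ p in E, Bf' (p:E3) θ φ ∂sphereMeasure := by
  have hAcl : IsClosed (Subtype.val '' E) :=
    ((hE.isCompact).image continuous_subtype_val).isClosed
  have hAne : (Subtype.val '' E).Nonempty := hEne.image _
  set r := Metric.infDist (sphParamE θ φ) (Subtype.val '' E) with hrdef
  have hr0 : 0 < r := (hAcl.notMem_iff_infDist_pos hAne).1 hq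
  obtain ⟨ε, hε0, hball⟩ := Metric.continuous_iff.1 (continuous_sphParamE_right θ) φ (r/2)
    (by linarith)
  set m := r^2/8 with hmdef
  have hm : 0 < m := by positivity
  have hkey : ∀ t ∈ Metric.ball φ ε, ∀ p ∈ E, m ≤ 1 - Uf (p:E3) θ t := by
    intro t ht p hp
    have h1 : dist (sphParamE θ t) (sphParamE θ φ) < r/2 := hball t (Metric.mem_ball.1 ht)
    have h2 : r ≤ Metric.infDist (sphParamE θ t) (Subtype.val '' E)
        + dist (sphParamE θ φ) (sphParamE θ t) := Metric.infDist_le_infDist_add_dist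
    have h3 : Metric.infDist (sphParamE θ t) (Subtype.val '' E) ≤
        dist (sphParamE θ t) (p:E3) := Metric.infDist_le_dist_of_mem ⟨p, hp, rfl⟩
    have h4 : r/2 ≤ dist (sphParamE θ t) (p:E3) := by
      rw [dist_comm (sphParamE θ φ)] at h2
      linarith
    have h5 := one_sub_inner (p:E3) (sphParamE θ t) (norm_coe_S2 p) (norm_sphParamE θ t)
    rw [← Uf_eq, h5, ← dist_eq_norm]
    rw [dist_comm] at h4
    have := dist_nonneg (x := (p:E3)) (y := sphParamE θ t)
    rw [hmdef]
    nlinarith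
  set k := (sphereMeasure E).toReal⁻¹ with hkdef
  have hev : (fun t => ⟪xiAvg E (sphParamE θ t), sphThetaE θ t⟫) =ᶠ[nhds φ]
      (fun t => k * ∫ p in E, Bf (p:E3) θ t ∂sphereMeasure) := by
    filter_upwards [Metric.ball_mem_nhds φ hε0] with t ht
    have hint := integrableOn_xiVec E hE.measurableSet (sphParamE θ t) hm
      (norm_sphParamE θ t) (fun p hp => by rw [Uf_eq]; exact hkey t ht p hp)
    rw [xiAvg, real_inner_smul_left, hkdef]
    congr 1
    calc ⟪∫ p in E, xiVec (p:E3) (sphParamE θ t) ∂sphereMeasure, sphThetaE θ t⟫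
        = ∫ p in E, ⟪sphThetaE θ t, xiVec (p:E3) (sphParamE θ t)⟫ ∂sphereMeasure := by
          rw [real_inner_comm, ← integral_inner hint]
      _ = ∫ p in E, Bf (p:E3) θ t ∂sphereMeasure :=
          integral_congr_ae (Filter.Eventually.of_forall fun p => by
            show ⟪sphThetaE θ t, xiVec (p:E3) (sphParamE θ t)⟫ = Bf (p:E3) θ t
            rw [real_inner_comm, Bf_eq])
  have hdom := hasDerivAt_integral_of_dominated_loc_of_deriv_le
    (μ := sphereMeasure.restrict E) (F := fun t (p:S2) => Bf (p:E3) θ t)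
    (F' := fun t (p:S2) => Bf' (p:E3) θ t) (x₀ := φ) (bound := fun _ => 3/m^2) (Metric.ball_mem_nhds φ hε0)
    (Filter.Eventually.of_forall fun t => (measurable_Bf θ t).aestronglyMeasurable)
    (by
      refine Integrable.mono' (integrable_const (1/m))
        (measurable_Bf θ φ).aestronglyMeasurable ?_
      rw [ae_restrict_iff' hE.measurableSet]
      exact Filter.Eventually.of_forall fun p hp => by
        rw [Real.norm_eq_abs]
        exact Bf_bound (p:E3) (norm_coe_S2 p) hm (hkey φ (Metric.mem_ball_self hε0) p hp))
    ((measurable_Bf' θ φ).aestronglyMeasurable)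
    (by
      rw [ae_restrict_iff' hE.measurableSet]
      exact Filter.Eventually.of_forall fun p hp => fun t ht => by
        rw [Real.norm_eq_abs]
        exact Bf'_bound (p:E3) (norm_coe_S2 p) hm (hkey t ht p hp))
    (integrable_const _)
    (by
      rw [ae_restrict_iff' hE.measurableSet]
      exact Filter.Eventually.of_forall fun p hp => fun t ht =>
        hasDerivAt_Bf_t (p:E3) θ t (lt_of_lt_of_le hm (hkey t ht p hp)).ne')
  refine ⟨hdom.1, ?_⟩
  rw [hev.deriv_eq]
  exact (hdom.2.const_mul k).deriv

lemma integrable_invdist (q : S2) :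
    Integrable (fun p : S2 => (dist (p : E3) (q : E3))⁻¹) sphereMeasure := by
  refine ⟨(dist_inv_measurable _).aestronglyMeasurable, ?_⟩
  rw [hasFiniteIntegral_iff_norm]
  have : ∀ p : S2, ENNReal.ofReal ‖(dist (p : E3) (q : E3))⁻¹‖
      = ENNReal.ofReal ((dist (p : E3) (q : E3))⁻¹) := fun p => by
    rw [Real.norm_eq_abs, abs_of_nonneg (by positivity)]
  simp_rw [this]
  exact lt_of_le_of_lt (lintegral_invdist _ (norm_coe_S2 q)) ENNReal.ofReal_lt_top

end Stmt9

open Stmt9 in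
theorem averaged_one_form_bound_and_exterior_derivative' :
    (∃ C : ℝ, 0 < C ∧ ∀ q : S2,
      ∫ p : S2, (dist (p : EuclideanSpace ℝ (Fin 3)) (q : EuclideanSpace ℝ (Fin 3)))⁻¹
        ∂sphereMeasure ≤ C) ∧
    (∃ C' : ℝ, 0 < C' ∧ ∀ δ : ℝ, 0 < δ → ∀ E : Set S2, IsClosed E →
      ENNReal.ofReal (δ/2) ≤ sphereMeasure E →
      (∀ q : S2, (q : EuclideanSpace ℝ (Fin 3)) ∉ Subtype.val '' E →
        ‖xiAvg E (q : EuclideanSpace ℝ (Fin 3))‖ ≤ C'/δ) ∧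
      (∀ θ φ : ℝ, sphParamE θ φ ∉ Subtype.val '' E →
        deriv (fun s => ⟪xiAvg E (sphParamE s φ), sphPhiE s φ⟫) θ -
          deriv (fun t => ⟪xiAvg E (sphParamE θ t), sphThetaE θ t⟫) φ =
            Real.sin θ)) := by
  constructor
  · exact ⟨1584, by norm_num, fun q => integral_invdist_le q⟩
  · refine ⟨6336, by norm_num, ?_⟩
    intro δ hδ E hEclosed hμE
    have hEm : MeasurableSet E := hEclosed.measurableSet
    have hEne : E.Nonempty := by
      rcases Set.eq_empty_or_nonempty E with rfl | h
      · exfalso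
        rw [measure_empty] at hμE
        have h0 : (0:ℝ) < δ/2 := by linarith
        exact absurd (lt_of_lt_of_le (ENNReal.ofReal_pos.2 h0) hμE) (lt_irrefl 0)
      · exact h
    have hμE_ne_top : sphereMeasure E ≠ ⊤ := measure_ne_top _ _
    have htR : δ/2 ≤ (sphereMeasure E).toReal :=
      (ENNReal.ofReal_le_iff_le_toReal hμE_ne_top).1 hμE
    have htRpos : 0 < (sphereMeasure E).toReal := lt_of_lt_of_le (by linarith) htR
    have hk : (sphereMeasure E).toReal⁻¹ ≤ 2/δ := by
      rw [show (2:ℝ)/δ = (δ/2)⁻¹ by rw [inv_div]]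
      exact inv_anti₀ (by linarith) htR
    have hAcl : IsClosed (Subtype.val '' E) :=
      ((hEclosed.isCompact).image continuous_subtype_val).isClosed
    have hAne : (Subtype.val '' E).Nonempty := hEne.image _
    constructor
    · intro q hqE
      have hq1 := norm_coe_S2 q
      set r := Metric.infDist (q:E3) (Subtype.val '' E) with hrdef
      have hr0 : 0 < r := (hAcl.notMem_iff_infDist_pos hAne).1 hqE
      have hne : ∀ p ∈ E, r^2/2 ≤ 1 - ⟪(p:E3), (q:E3)⟫ := by
        intro p hp
        have h5 := one_sub_inner (p:E3) (q:E3) (norm_coe_S2 p) hq1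
        have h3 : r ≤ dist (q:E3) (p:E3) := Metric.infDist_le_dist_of_mem ⟨p, hp, rfl⟩
        rw [h5, ← dist_eq_norm, dist_comm]
        nlinarith [dist_nonneg (x := (q:E3)) (y := (p:E3))]
      have hint := integrableOn_xiVec E hEm (q:E3) (by positivity) hq1 hne
      have hglob := integrable_invdist q
      have hb1 : ‖∫ p in E, xiVec (p:E3) (q:E3) ∂sphereMeasure‖ ≤
          ∫ p in E, 2 * (dist (p:E3) (q:E3))⁻¹ ∂sphereMeasure := by
        refine norm_integral_le_of_norm_le ((hglob.const_mul 2).restrict)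
          (Filter.Eventually.of_forall fun p => norm_xiVec_le _ _ (norm_coe_S2 p) hq1)
      have hb2 : ∫ p in E, 2 * (dist (p:E3) (q:E3))⁻¹ ∂sphereMeasure ≤ 3168 := by
        rw [integral_const_mul]
        have hle : ∫ p in E, (dist (p:E3) (q:E3))⁻¹ ∂sphereMeasure ≤
            ∫ p : S2, (dist (p:E3) (q:E3))⁻¹ ∂sphereMeasure :=
          setIntegral_le_integral hglob (Filter.Eventually.of_forall fun p => by positivity)
        have := integral_invdist_le q
        linarith
      calc ‖xiAvg E (q:E3)‖ = (sphereMeasure E).toReal⁻¹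
            * ‖∫ p in E, xiVec (p:E3) (q:E3) ∂sphereMeasure‖ := by
            rw [xiAvg, norm_smul, Real.norm_eq_abs,
              abs_of_nonneg (inv_nonneg.2 ENNReal.toReal_nonneg)]
        _ ≤ (2/δ) * 3168 :=
            mul_le_mul hk (hb1.trans hb2) (norm_nonneg _) (by positivity)
        _ = 6336/δ := by ring
    · intro θ φ hqE
      have h1 := deriv_part_phi E hEclosed hEne θ φ hqE
      have h2 := deriv_part_theta E hEclosed hEne θ φ hqE
      rw [h1.2, h2.2, ← mul_sub, ← integral_sub h1.1 h2.1]
      have hconst : ∫ p in E, (Af' (p:E3) θ φ - Bf' (p:E3) θ φ) ∂sphereMeasure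
          = ∫ _p in E, Real.sin θ ∂sphereMeasure := by
        refine setIntegral_congr_fun hEm fun p hp => ?_
        refine key_identity (p:E3) θ φ (norm_coe_S2 p) ?_
        have hne' : (p:E3) ≠ sphParamE θ φ := fun h => hqE ⟨p, hp, h⟩
        have hpos : 0 < 1 - ⟪(p:E3), sphParamE θ φ⟫ := by
          rw [one_sub_inner _ _ (norm_coe_S2 p) (norm_sphParamE θ φ)]
          have h0 : 0 < ‖(p:E3) - sphParamE θ φ‖ := by
            rw [norm_pos_iff]
            exact sub_ne_zero.2 hne'
          positivity
        rw [← Uf_eq]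
        exact hpos.ne'
      rw [hconst, setIntegral_const, measureReal_def, smul_eq_mul, ← mul_assoc,
        inv_mul_cancel₀ htRpos.ne', one_mul]


/-- There is a universal constant `C` such that for every `q ∈ S²`,
`∫_{S²} |p - q|⁻¹ d vol_{S²}(p) ≤ C`. Consequently, if `E ⊆ S²` is closed with
`vol_{S²}(E) ≥ δ/2 > 0`, then the averaged 1-form `ξ_E` satisfies `|ξ_E| ≤ C'/δ` on
S² ∖ E for a universal constant `C'`, and `dξ_E = vol_{S²}` on S² ∖ E (expressed in
spherical coordinates: `∂_θ⟨ξ_E∘F, ∂_φF⟩ - ∂_φ⟨ξ_E∘F, ∂_θF⟩ = sin θ` wherever `F`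
avoids `E`, matching the pullback `F*vol_{S²} = sinθ dθ∧dφ`). -/
theorem averaged_one_form_bound_and_exterior_derivative :
    (∃ C : ℝ, 0 < C ∧ ∀ q : S2,
      ∫ p : S2, (dist (p : EuclideanSpace ℝ (Fin 3)) (q : EuclideanSpace ℝ (Fin 3)))⁻¹
        ∂sphereMeasure ≤ C) ∧
    (∃ C' : ℝ, 0 < C' ∧ ∀ δ : ℝ, 0 < δ → ∀ E : Set S2, IsClosed E →
      ENNReal.ofReal (δ/2) ≤ sphereMeasure E →
      (∀ q : S2, (q : EuclideanSpace ℝ (Fin 3)) ∉ Subtype.val '' E →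
        ‖xiAvg E (q : EuclideanSpace ℝ (Fin 3))‖ ≤ C'/δ) ∧
      (∀ θ φ : ℝ, sphParamE θ φ ∉ Subtype.val '' E →
        deriv (fun s => ⟪xiAvg E (sphParamE s φ), sphPhiE s φ⟫) θ -
          deriv (fun t => ⟪xiAvg E (sphParamE θ t), sphThetaE θ t⟫) φ =
            Real.sin θ)) :=
  averaged_one_form_bound_and_exterior_derivative'

end
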